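/- Let n ≥ 1, 0 ≤ β < α ≤ 1, let b be an integer with 1 ≤ b ≤ n and k an integer with 1 ≤ k ≤ n/b. For any n×n real matrices B and C with B·C = A_{α,β} and all entries of CᵀC nonnegative, the expected approximation error 𝓔(B,C) = (1/√n)·sens_{k,b}(C)·‖B‖_F satisfies: 𝓔(B,C) ≥ √k · log(n+1)/π if α = 1, and 𝓔(B,C) ≥ √k if α < 1. Here log denotes the natural logarithm. -/

import Mathlib

open Finset Matrix

set_option maxHeartbeats 1000000

section AuxRSGD
open Finset Filter Real Topology
set_option maxHeartbeats 1000000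

noncomputable def fh : ℤ → ℝ := fun i => ((i : ℝ) + 1/2)⁻¹

lemma fh_den_ne (i : ℤ) : ((i : ℝ) + 1/2) ≠ 0 := by
  intro h
  have h2 : ((2*i+1 : ℤ) : ℝ) = 0 := by push_cast; linarith
  have : (2*i+1 : ℤ) = 0 := by exact_mod_cast h2
  omega

lemma hasSum_half_sq : HasSum (fun n : ℕ => ((n:ℝ) + 1/2)⁻¹ ^ 2) (π^2/2) := by
  have hb : HasSum (fun n : ℕ => (1:ℝ) / (n:ℝ) ^ 2) (π^2/6) := hasSum_zeta_two
  have he : HasSum (fun k : ℕ => (1:ℝ) / ((2*k : ℕ):ℝ) ^ 2) (π^2/24) := by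
    have h4 := hb.mul_left (4⁻¹ : ℝ)
    have hfun : (fun k : ℕ => (1:ℝ)/((2*k:ℕ):ℝ)^2) = fun k : ℕ => 4⁻¹ * (1/(k:ℝ)^2) := by
      funext k
      rcases Nat.eq_zero_or_pos k with rfl | hk
      · simp
      · have hk0 : (k:ℝ) ≠ 0 := Nat.cast_ne_zero.mpr hk.ne'
        push_cast
        field_simp
        ring
    rw [hfun]
    convert h4 using 1
    · rfl
    ring
  have hso : Summable (fun k : ℕ => (1:ℝ)/(((2*k+1 : ℕ)):ℝ)^2) := by
    have hg : Summable (fun k : ℕ => (1:ℝ)/((k:ℝ)+1)^2) := by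
      have h0 : Summable (fun n : ℕ => (1:ℝ)/(n:ℝ)^2) :=
        (Real.summable_one_div_nat_pow).2 one_lt_two
      have := (summable_nat_add_iff 1).2 h0
      apply this.congr
      intro k; push_cast; ring
    apply Summable.of_nonneg_of_le (fun k => by positivity) (fun k => ?_) hg
    apply one_div_le_one_div_of_le (by positivity)
    have : ((k:ℝ)+1) ≤ ((2*k+1 : ℕ):ℝ) := by push_cast; linarith [Nat.cast_nonneg (α := ℝ) k]
    nlinarith [Nat.cast_nonneg (α := ℝ) k]
  obtain ⟨t, ht⟩ := hso
  have hcomb := HasSum.even_add_odd (f := fun n : ℕ => (1:ℝ)/(n:ℝ)^2) he ht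
  have hteq : t = π^2/8 := by
    have := hcomb.unique hb
    linarith
  subst hteq
  have hfun2 : (fun n : ℕ => ((n:ℝ) + 1/2)⁻¹ ^ 2) = fun n => 4 * ((1:ℝ)/(((2*n+1 : ℕ)):ℝ)^2) := by
    funext n
    have h1 : ((2*n+1 : ℕ):ℝ) = 2*(n:ℝ)+1 := by push_cast; ring
    have h2 : (2*(n:ℝ)+1) ≠ 0 := by positivity
    rw [h1]
    rw [inv_eq_one_div]
    field_simp
    ring
  rw [hfun2]
  have := ht.mul_left (4:ℝ)
  convert this using 1
  · rfl
  ring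

lemma hasSum_fh_sq : HasSum (fun i : ℤ => fh i ^ 2) (π^2) := by
  have h1 := hasSum_half_sq
  have h := h1.int_rec h1
  have hfun : (fun i : ℤ => fh i ^ 2) =
      (Int.rec (fun n : ℕ => ((n:ℝ)+1/2)⁻¹^2) (fun n : ℕ => ((n:ℝ)+1/2)⁻¹^2) : ℤ → ℝ) := by
    funext i
    cases i with
    | ofNat m =>
      show fh (Int.ofNat m) ^ 2 = ((m:ℝ)+1/2)⁻¹^2
      simp [fh]
    | negSucc m =>
      show fh (Int.negSucc m) ^ 2 = ((m:ℝ)+1/2)⁻¹^2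
      simp only [fh, Int.cast_negSucc]
      rw [show (-((m+1 : ℕ):ℝ) + 1/2) = -((m:ℝ)+1/2) by push_cast; ring, inv_neg, neg_sq]
  rw [hfun]
  convert h using 1
  ring
lemma fh_sub (i : ℤ) (d : ℕ) : fh i - fh (i + (d:ℤ)) = (d:ℝ) * (fh i * fh (i + (d:ℤ))) := by
  have h1 := fh_den_ne i
  have h2 := fh_den_ne (i + (d:ℤ))
  unfold fh
  rw [inv_sub_inv h1 h2, div_eq_mul_inv, ← mul_inv]
  congr 1
  push_cast
  ring

lemma hasSum_tele (d : ℕ) (hd : 0 < d) : HasSum (fun i : ℤ => fh i - fh (i + (d:ℤ))) 0 := by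
  have hs2 : Summable (fun i : ℤ => fh i ^ 2) := hasSum_fh_sq.summable
  have hs2' : Summable (fun i : ℤ => fh (i + (d:ℤ)) ^ 2) := by
    have := (Equiv.addRight (d:ℤ)).summable_iff.mpr hs2
    exact this
  have hsum : Summable (fun i : ℤ => fh i - fh (i + (d:ℤ))) := by
    have hb : Summable (fun i : ℤ => (fh i ^2 + fh (i+(d:ℤ))^2) * ((d:ℝ)/2)) :=
      (hs2.add hs2').mul_right _
    apply Summable.of_abs
    apply Summable.of_nonneg_of_le (fun i => abs_nonneg _) (fun i => ?_) hb
    rw [fh_sub i d, abs_mul, abs_of_nonneg (by positivity : (0:ℝ) ≤ (d:ℝ))]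
    have habs : |fh i * fh (i+(d:ℤ))| ≤ (fh i^2 + fh (i+(d:ℤ))^2)/2 := by
      nlinarith [sq_nonneg (|fh i| - |fh (i+(d:ℤ))|), abs_mul (fh i) (fh (i+(d:ℤ))),
        sq_abs (fh i), sq_abs (fh (i+(d:ℤ))), abs_nonneg (fh i * fh (i+(d:ℤ)))]
    nlinarith [abs_nonneg (fh i * fh (i+(d:ℤ))), Nat.cast_nonneg (α := ℝ) d]
  have hH : HasSum (fun i : ℤ => fh i - fh (i+(d:ℤ))) (∑' i : ℤ, (fh i - fh (i+(d:ℤ)))) :=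
    hsum.hasSum
  set sN : ℕ → Finset ℤ := fun N => (Finset.range (2*N+1)).image (fun t : ℕ => -(N:ℤ) + (t:ℤ)) with hsN
  have hmem : ∀ N x, x ∈ sN N ↔ -(N:ℤ) ≤ x ∧ x ≤ N := by
    intro N x
    simp only [hsN, Finset.mem_image, Finset.mem_range]
    constructor
    · rintro ⟨t, ht, rfl⟩; omega
    · intro h; exact ⟨(x + N).toNat, by omega, by omega⟩
  have hmono : Monotone sN := by
    intro a b hab x hx
    rw [hmem] at hx ⊢
    omega
  have htend : Tendsto sN atTop atTop :=
    tendsto_atTop_finset_of_monotone hmono (fun x => ⟨x.natAbs, by rw [hmem]; omega⟩)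
  have hlim1 : Tendsto (fun N => ∑ i ∈ sN N, (fh i - fh (i+(d:ℤ)))) atTop
      (𝓝 (∑' i : ℤ, (fh i - fh (i+(d:ℤ))))) := hH.comp htend
  have hval : ∀ N, ∑ i ∈ sN N, (fh i - fh (i+(d:ℤ)))
      = ∑ u ∈ Finset.range d, (fh (-(N:ℤ)+u) - fh ((N:ℤ)+1+u)) := by
    intro N
    rw [hsN]
    rw [Finset.sum_image (by intro a _ b _ h; simp only at h; omega)]
    have hsplit : ∀ i : ℤ, fh i - fh (i+(d:ℤ)) = ∑ u ∈ Finset.range d, (fh (i+u) - fh (i+(u:ℤ)+1)) := by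
      intro i
      have h := Finset.sum_range_sub' (fun u : ℕ => fh (i + (u:ℤ))) d
      calc fh i - fh (i+(d:ℤ))
          = (fun u : ℕ => fh (i + (u:ℤ))) 0 - (fun u : ℕ => fh (i + (u:ℤ))) d := by simp
        _ = ∑ u ∈ Finset.range d,
              ((fun u : ℕ => fh (i + (u:ℤ))) u - (fun u : ℕ => fh (i + (u:ℤ))) (u+1)) := h.symm
        _ = ∑ u ∈ Finset.range d, (fh (i+u) - fh (i+(u:ℤ)+1)) := by
            apply Finset.sum_congr rfl
            intro u _
            congr 2
            push_cast
            ring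
    calc ∑ t ∈ Finset.range (2*N+1), (fh (-(N:ℤ)+t) - fh (-(N:ℤ)+t+(d:ℤ)))
        = ∑ t ∈ Finset.range (2*N+1), ∑ u ∈ Finset.range d,
            (fh (-(N:ℤ)+t+u) - fh (-(N:ℤ)+t+(u:ℤ)+1)) := by
          apply Finset.sum_congr rfl
          intro t _
          exact hsplit _
      _ = ∑ u ∈ Finset.range d, ∑ t ∈ Finset.range (2*N+1),
            ((fun t : ℕ => fh (-(N:ℤ)+(u:ℤ)+(t:ℤ))) t - (fun t : ℕ => fh (-(N:ℤ)+(u:ℤ)+(t:ℤ))) (t+1)) := by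
          rw [Finset.sum_comm]
          apply Finset.sum_congr rfl
          intro u _
          apply Finset.sum_congr rfl
          intro t _
          congr 2 <;> push_cast <;> ring
      _ = ∑ u ∈ Finset.range d, (fh (-(N:ℤ)+u) - fh ((N:ℤ)+1+u)) := by
          apply Finset.sum_congr rfl
          intro u _
          rw [Finset.sum_range_sub' (fun t : ℕ => fh (-(N:ℤ)+(u:ℤ)+(t:ℤ))) (2*N+1)]
          congr 1
          · congr 1; push_cast; ring
          · congr 1; push_cast; ring
  have hlim2 : Tendsto (fun N : ℕ => ∑ u ∈ Finset.range d, (fh (-(N:ℤ)+u) - fh ((N:ℤ)+1+u)))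
      atTop (𝓝 0) := by
    have h0 : (0:ℝ) = ∑ _u ∈ Finset.range d, (0:ℝ) := by simp
    rw [h0]
    apply tendsto_finset_sum
    intro u _
    have hA : Tendsto (fun N : ℕ => fh (-(N:ℤ)+u)) atTop (𝓝 0) := by
      have h1 : Tendsto (fun N : ℕ => (N:ℝ) - ((u:ℝ)+1/2)) atTop atTop :=
        tendsto_atTop_add_const_right _ _ tendsto_natCast_atTop_atTop
      have h2 := h1.inv_tendsto_atTop
      have h3 := h2.neg
      rw [neg_zero] at h3
      apply h3.congr
      intro N
      unfold fh
      simp only [Pi.inv_apply]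
      push_cast
      rw [neg_inv]
      congr 1
      ring
    have hB : Tendsto (fun N : ℕ => fh ((N:ℤ)+1+u)) atTop (𝓝 0) := by
      have h1 : Tendsto (fun N : ℕ => (N:ℝ) + ((u:ℝ)+3/2)) atTop atTop :=
        tendsto_atTop_add_const_right _ _ tendsto_natCast_atTop_atTop
      have h2 := h1.inv_tendsto_atTop
      apply h2.congr
      intro N
      unfold fh
      simp only [Pi.inv_apply]
      push_cast
      congr 1
      ring
    have := hA.sub hB
    simpa using this
  have hzero : (∑' i : ℤ, (fh i - fh (i+(d:ℤ)))) = 0 :=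
    tendsto_nhds_unique (hlim1.congr hval) hlim2
  rw [← hzero]
  exact hH
lemma hasSum_fh_mul (d : ℤ) : HasSum (fun i : ℤ => fh i * fh (i + d)) (if d = 0 then π^2 else 0) := by
  have hpos : ∀ e : ℕ, 0 < e → HasSum (fun i : ℤ => fh i * fh (i + (e:ℤ))) 0 := by
    intro e he
    have ht := (hasSum_tele e he).mul_left ((e:ℝ)⁻¹)
    rw [mul_zero] at ht
    have hfun : (fun i : ℤ => (e:ℝ)⁻¹ * (fh i - fh (i + (e:ℤ)))) = fun i : ℤ => fh i * fh (i + (e:ℤ)) := by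
      funext i
      rw [fh_sub i e]
      have he0 : ((e:ℝ)) ≠ 0 := Nat.cast_ne_zero.mpr he.ne'
      field_simp
    rwa [hfun] at ht
  rcases lt_trichotomy d 0 with hd | rfl | hd
  · rw [if_neg hd.ne]
    set e : ℕ := (-d).toNat with he
    have hed : (e:ℤ) = -d := Int.toNat_of_nonneg (by omega)
    have h0 : HasSum (fun i : ℤ => fh i * fh (i + (e:ℤ))) 0 := hpos e (by omega)
    have hfun : ((fun i : ℤ => fh i * fh (i + d)) ∘ (fun i : ℤ => i + (e:ℤ)))
        = fun i : ℤ => fh i * fh (i + (e:ℤ)) := by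
      funext i
      simp only [Function.comp]
      rw [show i + (e:ℤ) + d = i by omega]
      ring
    have hiff := (Equiv.addRight (e:ℤ)).hasSum_iff
      (f := fun i : ℤ => fh i * fh (i + d)) (a := 0)
    apply hiff.mp
    show HasSum ((fun i : ℤ => fh i * fh (i + d)) ∘ (Equiv.addRight (e:ℤ))) 0
    have : ⇑(Equiv.addRight (e:ℤ)) = fun i : ℤ => i + (e:ℤ) := rfl
    rw [this, hfun]
    exact h0
  · rw [if_pos rfl]
    have : (fun i : ℤ => fh i * fh (i + 0)) = fun i : ℤ => fh i ^ 2 := by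
      funext i; rw [add_zero, sq]
    rw [this]
    exact hasSum_fh_sq
  · rw [if_neg hd.ne']
    have hed : ((d.toNat : ℤ)) = d := Int.toNat_of_nonneg hd.le
    have := hpos d.toNat (by omega)
    rwa [hed] at this

lemma hasSum_fh_shift (a c : ℤ) :
    HasSum (fun i : ℤ => fh (i - a) * fh (i - c)) (if a = c then π^2 else 0) := by
  have h := hasSum_fh_mul (a - c)
  have hfun : ((fun i : ℤ => fh (i - a) * fh (i - c)) ∘ (fun i : ℤ => i + a))
      = fun i : ℤ => fh i * fh (i + (a - c)) := by
    funext i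
    simp only [Function.comp]
    congr 2 <;> ring
  have hiff := (Equiv.addRight a).hasSum_iff
    (f := fun i : ℤ => fh (i - a) * fh (i - c)) (a := if a = c then π^2 else 0)
  apply hiff.mp
  show HasSum ((fun i : ℤ => fh (i - a) * fh (i - c)) ∘ (Equiv.addRight a)) _
  have hco : ⇑(Equiv.addRight a) = fun i : ℤ => i + a := rfl
  rw [hco, hfun]
  have hif : (if a = c then (π^2:ℝ) else 0) = (if a - c = 0 then (π^2:ℝ) else 0) := by
    rcases eq_or_ne a c with rfl | hne
    · simp
    · rw [if_neg hne, if_neg (sub_ne_zero.mpr hne)]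
  rw [hif]
  exact h
lemma hilbert_bound (n : ℕ) (x : Fin n → ℝ) :
    ∑ i : Fin n, (∑ j : Fin n, (π * (((i:ℕ):ℝ) - ((j:ℕ):ℝ) + 1/2))⁻¹ * x j)^2
      ≤ ∑ j : Fin n, x j ^ 2 := by
  classical
  set y : ℤ → ℝ := fun i => ∑ j : Fin n, x j * (π⁻¹ * fh (i - ((j:ℕ):ℤ))) with hy
  have hterm : ∀ p : Fin n × Fin n,
      HasSum (fun i : ℤ => (x p.1 * π⁻¹) * (x p.2 * π⁻¹) * (fh (i - ((p.1:ℕ):ℤ)) * fh (i - ((p.2:ℕ):ℤ))))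
        ((x p.1 * π⁻¹) * (x p.2 * π⁻¹) * (if ((p.1:ℕ):ℤ) = ((p.2:ℕ):ℤ) then π^2 else 0)) :=
    fun p => (hasSum_fh_shift _ _).mul_left _
  have h := hasSum_sum (s := (Finset.univ : Finset (Fin n × Fin n))) (fun p _ => hterm p)
  have hfun : (fun i : ℤ => ∑ p : Fin n × Fin n,
      (x p.1 * π⁻¹) * (x p.2 * π⁻¹) * (fh (i - ((p.1:ℕ):ℤ)) * fh (i - ((p.2:ℕ):ℤ))))
      = fun i : ℤ => y i ^ 2 := by
    funext i
    rw [hy, sq, Finset.sum_mul_sum]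
    rw [← Fintype.sum_prod_type']
    apply Finset.sum_congr rfl
    intro p _
    ring
  have hval : (∑ p : Fin n × Fin n,
      (x p.1 * π⁻¹) * (x p.2 * π⁻¹) * (if ((p.1:ℕ):ℤ) = ((p.2:ℕ):ℤ) then π^2 else 0))
      = ∑ j : Fin n, x j ^ 2 := by
    rw [Fintype.sum_prod_type]
    have hcond : ∀ j k : Fin n, (((j:ℕ):ℤ) = ((k:ℕ):ℤ)) = (j = k) := by
      intro j k
      apply propext
      constructor
      · intro hh; exact Fin.ext (by exact_mod_cast hh)
      · rintro rfl; rfl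
    apply Finset.sum_congr rfl
    intro j _
    calc ∑ k : Fin n, (x j * π⁻¹) * (x k * π⁻¹) * (if ((j:ℕ):ℤ) = ((k:ℕ):ℤ) then π^2 else 0)
        = ∑ k : Fin n, (if j = k then (x j * π⁻¹) * (x k * π⁻¹) * π^2 else 0) := by
          apply Finset.sum_congr rfl
          intro k _
          rcases eq_or_ne j k with rfl | hne
          · simp
          · have hne' : ((j:ℕ):ℤ) ≠ ((k:ℕ):ℤ) :=
              fun hh => hne (Fin.ext (by exact_mod_cast hh))
            simp [hne, hne']
      _ = (x j * π⁻¹) * (x j * π⁻¹) * π^2 := by rw [Finset.sum_ite_eq]; simp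
      _ = x j ^ 2 := by
          have : (π:ℝ) ≠ 0 := Real.pi_ne_zero
          field_simp
  rw [hfun, hval] at h
  have hle := sum_le_hasSum ((Finset.univ : Finset (Fin n)).image (fun j : Fin n => ((j:ℕ):ℤ)))
    (fun i _ => sq_nonneg (y i)) h
  rw [Finset.sum_image (by intro a _ b _ hab; exact Fin.ext (by simpa using hab))] at hle
  refine le_trans (le_of_eq ?_) hle
  apply Finset.sum_congr rfl
  intro i _
  congr 1
  rw [hy]
  apply Finset.sum_congr rfl
  intro j _
  unfold fh
  rw [mul_inv]
  push_cast
  ring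
noncomputable def gR : ℕ → ℝ := fun d => ((d:ℝ) + 1/2)⁻¹

noncomputable def Hh : ℕ → ℝ := fun m => ∑ d ∈ Finset.range m, gR d

lemma gR_nonneg (d : ℕ) : 0 ≤ gR d := by unfold gR; positivity

lemma Hh_lb (m : ℕ) : 2 - Real.log 3 + Real.log (2*(m:ℝ)+3) ≤ Hh (m+1) := by
  induction m with
  | zero =>
    have : Hh 1 = 2 := by
      unfold Hh gR
      rw [Finset.sum_range_one]
      norm_num
    rw [this]
    norm_num
  | succ m ih =>
    have hstep : Hh (m+2) = Hh (m+1) + gR (m+1) := by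
      unfold Hh
      rw [Finset.sum_range_succ]
    have hlog : Real.log (2*((m:ℝ)+1)+3) - Real.log (2*(m:ℝ)+3) ≤ gR (m+1) := by
      have hp1 : (0:ℝ) < 2*(m:ℝ)+3 := by positivity
      have hp2 : (0:ℝ) < 2*((m:ℝ)+1)+3 := by positivity
      rw [← Real.log_div hp2.ne' hp1.ne']
      have hd : (0:ℝ) < (2*((m:ℝ)+1)+3) / (2*(m:ℝ)+3) := by positivity
      refine le_trans (Real.log_le_sub_one_of_pos hd) ?_
      unfold gR
      push_cast
      rw [div_sub_one hp1.ne', inv_eq_one_div]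
      rw [div_le_div_iff₀ hp1 (by positivity)]
      ring_nf
      nlinarith [Nat.cast_nonneg (α := ℝ) m]
    rw [hstep]
    push_cast
    push_cast at ih hlog
    linarith
lemma Tsum_lb (n : ℕ) : (n:ℝ) * Real.log ((n:ℝ)+1) ≤ ∑ m ∈ Finset.range n, Hh (m+1) := by
  induction n with
  | zero => simp
  | succ n ih =>
    rw [Finset.sum_range_succ]
    have hlb := Hh_lb n
    have hln2 : Real.log 2 ≤ 1 := by
      have := Real.log_le_sub_one_of_pos (by norm_num : (0:ℝ) < 2)
      linarith
    -- key : (n+1) log (n+2) ≤ n log (n+1) + 2 - log 3 + log (2n+3)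
    have hp1 : (0:ℝ) < (n:ℝ)+1 := by positivity
    have hp2 : (0:ℝ) < (n:ℝ)+2 := by positivity
    have hp3 : (0:ℝ) < 2*(n:ℝ)+3 := by positivity
    have k1 : Real.log ((n:ℝ)+2) - Real.log ((n:ℝ)+1) ≤ 1/((n:ℝ)+1) := by
      rw [← Real.log_div hp2.ne' hp1.ne']
      refine le_trans (Real.log_le_sub_one_of_pos (by positivity)) ?_
      rw [div_sub_one hp1.ne']
      have he : ((n:ℝ)+2) - ((n:ℝ)+1) = 1 := by ring
      rw [he]
    have k2 : Real.log ((n:ℝ)+2) - Real.log (2*(n:ℝ)+3) ≤ Real.log 2 - Real.log 3 := by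
      rw [← Real.log_div hp2.ne' hp3.ne', ← Real.log_div (by norm_num) (by norm_num)]
      apply Real.log_le_log (by positivity)
      rw [div_le_div_iff₀ hp3 (by norm_num)]
      nlinarith [Nat.cast_nonneg (α := ℝ) n]
    have k3 : (n:ℝ) * (Real.log ((n:ℝ)+2) - Real.log ((n:ℝ)+1)) ≤ 1 := by
      calc (n:ℝ) * (Real.log ((n:ℝ)+2) - Real.log ((n:ℝ)+1)) ≤ (n:ℝ) * (1/((n:ℝ)+1)) := by
            apply mul_le_mul_of_nonneg_left k1 (Nat.cast_nonneg n)
        _ ≤ 1 := by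
            rw [mul_one_div, div_le_one hp1]
            linarith
    push_cast
    push_cast at ih hlb
    have he : Real.log ((n:ℝ)+1+1) = Real.log ((n:ℝ)+2) := by rw [show ((n:ℝ)+1+1) = ((n:ℝ)+2) by ring]
    rw [he]
    linarith [k2, k3, hlb, ih, hln2]
lemma grid_eq (n : ℕ) :
    ∑ j ∈ Finset.range n, ∑ i ∈ Finset.range n, (if j ≤ i then gR (i-j) else 0)
      = ∑ m ∈ Finset.range n, Hh (m+1) := by
  have hinner : ∀ j : ℕ, ∑ i ∈ Finset.range n, (if j ≤ i then gR (i-j) else 0) = Hh (n-j) := by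
    intro j
    rw [← Finset.sum_filter]
    have hfil : Finset.filter (fun i => j ≤ i) (Finset.range n) = Finset.Ico j n := by
      ext i
      simp only [Finset.mem_filter, Finset.mem_range, Finset.mem_Ico]
      omega
    rw [hfil, Finset.sum_Ico_eq_sum_range]
    unfold Hh
    apply Finset.sum_congr rfl
    intro t _
    congr 1
    omega
  rw [Finset.sum_congr rfl (fun j _ => hinner j)]
  have := Finset.sum_range_reflect (fun m => Hh (m+1)) n
  rw [← this]
  apply Finset.sum_congr rfl
  intro j hj
  rw [Finset.mem_range] at hj
  congr 1
  omega

lemma sum_shift_period (G : ℕ → ℝ) (n : ℕ) (hG : ∀ m, G (m + n) = G m) (c : ℕ) :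
    ∑ s ∈ Finset.range n, G (s + c) = ∑ s ∈ Finset.range n, G s := by
  induction c with
  | zero => simp
  | succ c ih =>
    have h1 : ∑ s ∈ Finset.range n, G (s + (c+1)) = ∑ s ∈ Finset.range n, G ((s+1) + c) := by
      apply Finset.sum_congr rfl
      intro s _
      congr 1
      omega
    have h2 : ∑ s ∈ Finset.range n, (fun s => G (s + c)) (s+1)
        = (∑ s ∈ Finset.range (n+1), G (s + c)) - G (0 + c) := by
      rw [Finset.sum_range_succ']
      ring
    have h3 : ∑ s ∈ Finset.range (n+1), G (s + c) = (∑ s ∈ Finset.range n, G (s + c)) + G (n + c) := by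
      rw [Finset.sum_range_succ]
    have h4 : G (n + c) = G (0 + c) := by
      rw [show n + c = (0 + c) + n by omega, hG]
    rw [h1]
    show ∑ s ∈ Finset.range n, (fun s => G (s + c)) (s+1) = _
    rw [h2, h3, h4, ih]
    ring

lemma sep_key {n b k : ℕ} (hkb : k * b ≤ n) (hb : 1 ≤ b) {s t1 t2 : ℕ}
    (hs : s < n) (h1 : t1 < k) (h2 : t2 < k) (hlt : t1 < t2) :
    b ≤ Nat.dist ((s + t1*b) % n) ((s + t2*b) % n) := by
  have e1 : t1*b + b ≤ t2*b := by
    have ha : (t1+1)*b ≤ t2*b := Nat.mul_le_mul_right b (by omega)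
    have hb' : (t1+1)*b = t1*b + b := by ring
    omega
  have e2 : t2*b + b ≤ n := by
    have ha : (t2+1)*b ≤ k*b := Nat.mul_le_mul_right b (by omega)
    have hb' : (t2+1)*b = t2*b + b := by ring
    omega
  have hmod : ∀ u : ℕ, u < 2*n → u % n = u ∨ (n ≤ u ∧ u % n = u - n) := by
    intro u hu
    rcases Nat.lt_or_ge u n with h | h
    · exact Or.inl (Nat.mod_eq_of_lt h)
    · right
      refine ⟨h, ?_⟩
      rw [Nat.mod_eq_sub_mod h, Nat.mod_eq_of_lt (by omega)]
  have hu1 : s + t1*b < 2*n := by omega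
  have hu2 : s + t2*b < 2*n := by omega
  have m1 := hmod _ hu1
  have m2 := hmod _ hu2
  simp only [Nat.dist]
  omega

end AuxRSGD


/-- `a_m = Σ_{t=0}^{m} α^t β^{m−t}`. -/
noncomputable def aCoef (α β : ℝ) (m : ℕ) : ℝ :=
  ∑ t ∈ Finset.range (m + 1), α ^ t * β ^ (m - t)

/-- The SGD workload matrix `A_{α,β}`. -/
noncomputable def Amat (n : ℕ) (α β : ℝ) : Matrix (Fin n) (Fin n) ℝ :=
  Matrix.of fun i j => if (j : ℕ) ≤ (i : ℕ) then aCoef α β ((i : ℕ) - (j : ℕ)) else 0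

/-- The `b`-min-separated `L2`-sensitivity with at most `k` participations. -/
noncomputable def sens (n b k : ℕ) (C : Matrix (Fin n) (Fin n) ℝ) : ℝ :=
  Real.sqrt (sSup { x : ℝ | ∃ π : Finset (Fin n), π.card ≤ k ∧
    (∀ i ∈ π, ∀ j ∈ π, i ≠ j → b ≤ Nat.dist (i : ℕ) (j : ℕ)) ∧
    x = ∑ i ∈ π, ∑ j ∈ π, (Cᵀ * C) i j })

/-- The Frobenius norm. -/
noncomputable def frob (n : ℕ) (C : Matrix (Fin n) (Fin n) ℝ) : ℝ :=
  Real.sqrt (∑ i : Fin n, ∑ j : Fin n, (C i j) ^ 2)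

/-- lower bound on the expected approximation error of any factorization
`A_{α,β} = B·C` with `CᵀC` entrywise nonnegative. -/
theorem approximation_error_lower_bound (n b k : ℕ) (hn : 1 ≤ n)
    (hb : 1 ≤ b) (hbn : b ≤ n) (hk : 1 ≤ k) (hkn : k ≤ n / b)
    (α β : ℝ) (hβ : 0 ≤ β) (hβα : β < α) (hα : α ≤ 1)
    (B C : Matrix (Fin n) (Fin n) ℝ) (hBC : B * C = Amat n α β)
    (hC : ∀ i j, 0 ≤ (Cᵀ * C) i j) :
    (α = 1 →
      Real.sqrt k * Real.log (n + 1) / Real.pi ≤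
        (1 / Real.sqrt n) * sens n b k C * frob n B) ∧
    (α < 1 →
      Real.sqrt k ≤ (1 / Real.sqrt n) * sens n b k C * frob n B) := by
    classical
  have hn0 : 0 < n := hn
  have hnR : (0:ℝ) < n := by exact_mod_cast hn
  set W : ℝ := ∑ j : Fin n, ∑ l : Fin n, C l j ^ 2 with hWdef
  have hW0 : 0 ≤ W := by rw [hWdef]; positivity
  have hfrob0 : 0 ≤ frob n B := Real.sqrt_nonneg _
  -- ============ sensitivity lower bound ============
  have hsens : Real.sqrt ((k:ℝ) * W / n) ≤ sens n b k C := by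
    have hkb : k * b ≤ n := le_trans (Nat.mul_le_mul_right b hkn) (Nat.div_mul_le_self n b)
    set w : Fin n → ℝ := fun j => (Cᵀ * C) j j with hw
    have hWw : W = ∑ j : Fin n, w j := by
      rw [hWdef]
      apply Finset.sum_congr rfl
      intro j _
      show ∑ l : Fin n, C l j ^ 2 = (Cᵀ * C) j j
      rw [Matrix.mul_apply]
      apply Finset.sum_congr rfl
      intro l _
      rw [Matrix.transpose_apply, sq]
    set idx : ℕ → Fin n := fun m => (⟨m % n, Nat.mod_lt m hn0⟩ : Fin n) with hidx
    set G : ℕ → ℝ := fun m => w (idx m) with hG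
    have hGper : ∀ m, G (m + n) = G m := by
      intro m
      show w (idx (m+n)) = w (idx m)
      congr 1
      apply Fin.ext
      exact Nat.add_mod_right m n
    have hGs : ∑ s ∈ Finset.range n, G s = ∑ j : Fin n, w j := by
      rw [← Fin.sum_univ_eq_sum_range G n]
      apply Finset.sum_congr rfl
      intro i _
      show w (idx (i:ℕ)) = w i
      congr 1
      apply Fin.ext
      show (i:ℕ) % n = (i:ℕ)
      exact Nat.mod_eq_of_lt i.isLt
    have htot : ∑ s ∈ Finset.range n, (∑ t ∈ Finset.range k, G (s + t*b)) = (k:ℝ) * W := by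
      rw [Finset.sum_comm]
      have hrot : ∀ t, ∑ s ∈ Finset.range n, G (s + t*b) = ∑ s ∈ Finset.range n, G s :=
        fun t => sum_shift_period G n hGper (t*b)
      rw [Finset.sum_congr rfl (fun t _ => hrot t), Finset.sum_const, Finset.card_range,
        nsmul_eq_mul, hGs, hWw]
    have hex : ∃ s, s < n ∧ (k:ℝ) * W / n ≤ ∑ t ∈ Finset.range k, G (s + t*b) := by
      by_contra hcon
      push_neg at hcon
      have hlt : ∑ s ∈ Finset.range n, (∑ t ∈ Finset.range k, G (s + t*b))
          < ∑ _s ∈ Finset.range n, ((k:ℝ) * W / n) := by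
        apply Finset.sum_lt_sum_of_nonempty (Finset.nonempty_range_iff.mpr hn0.ne')
        intro s hsmem
        exact hcon s (Finset.mem_range.mp hsmem)
      rw [htot, Finset.sum_const, Finset.card_range, nsmul_eq_mul] at hlt
      rw [show (n:ℝ) * ((k:ℝ)*W/n) = (k:ℝ)*W by field_simp] at hlt
      exact lt_irrefl _ hlt
    obtain ⟨s, hs, hsval⟩ := hex
    set πs : Finset (Fin n) := (Finset.range k).image (fun t => idx (s + t*b)) with hπ
    have hdistsep : ∀ t1 t2, t1 < k → t2 < k → t1 ≠ t2 →
        b ≤ Nat.dist ((idx (s+t1*b)) : ℕ) ((idx (s+t2*b)) : ℕ) := by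
      intro t1 t2 h1 h2 hne
      show b ≤ Nat.dist ((s+t1*b) % n) ((s+t2*b) % n)
      rcases Nat.lt_or_ge t1 t2 with hlt | hge
      · exact sep_key hkb hb hs h1 h2 hlt
      · have hlt2 : t2 < t1 := by omega
        rw [Nat.dist_comm]
        exact sep_key hkb hb hs h2 h1 hlt2
    have hinj : ∀ t1 ∈ Finset.range k, ∀ t2 ∈ Finset.range k,
        idx (s+t1*b) = idx (s+t2*b) → t1 = t2 := by
      intro t1 h1 t2 h2 heq
      by_contra hne
      have hd := hdistsep t1 t2 (Finset.mem_range.mp h1) (Finset.mem_range.mp h2) hne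
      rw [heq, Nat.dist_self] at hd
      omega
    have hcard : πs.card ≤ k := le_trans Finset.card_image_le (by rw [Finset.card_range])
    have hsepπ : ∀ i ∈ πs, ∀ j ∈ πs, i ≠ j → b ≤ Nat.dist (i:ℕ) (j:ℕ) := by
      intro i hi j hj hij
      rw [hπ, Finset.mem_image] at hi hj
      obtain ⟨t1, ht1, rfl⟩ := hi
      obtain ⟨t2, ht2, rfl⟩ := hj
      apply hdistsep t1 t2 (Finset.mem_range.mp ht1) (Finset.mem_range.mp ht2)
      intro hEq
      exact hij (by rw [hEq])
    have hvalπ : ∑ i ∈ πs, w i = ∑ t ∈ Finset.range k, G (s + t*b) := by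
      rw [hπ, Finset.sum_image hinj]
    have hx0 : (k:ℝ) * W / n ≤ ∑ i ∈ πs, ∑ j ∈ πs, (Cᵀ*C) i j := by
      have hd : ∑ i ∈ πs, w i ≤ ∑ i ∈ πs, ∑ j ∈ πs, (Cᵀ*C) i j := by
        apply Finset.sum_le_sum
        intro i hi
        exact Finset.single_le_sum (fun j _ => hC i j) hi
      calc (k:ℝ)*W/n ≤ ∑ t ∈ Finset.range k, G (s+t*b) := hsval
        _ = ∑ i ∈ πs, w i := hvalπ.symm
        _ ≤ _ := hd
    unfold sens
    apply Real.sqrt_le_sqrt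
    apply le_csSup_of_le ?_ ?_ hx0
    · apply Set.Finite.bddAbove
      apply Set.Finite.subset
        (Set.finite_range (fun π : Finset (Fin n) => ∑ i ∈ π, ∑ j ∈ π, (Cᵀ*C) i j))
      rintro x ⟨π, -, -, rfl⟩
      exact ⟨π, rfl⟩
    · exact ⟨πs, hcard, hsepπ, rfl⟩
  -- ============ Cauchy-Schwarz key bound ============
  have hkey : ∀ M : Matrix (Fin n) (Fin n) ℝ,
      (∀ x : Fin n → ℝ, ∑ i : Fin n, (∑ j : Fin n, M i j * x j)^2 ≤ ∑ j : Fin n, x j ^ 2) →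
      ∑ i : Fin n, ∑ j : Fin n, M i j * Amat n α β i j ≤ frob n B * Real.sqrt W := by
    intro M hM
    rw [← hBC]
    have expand : ∑ i : Fin n, ∑ j : Fin n, M i j * (B*C) i j
        = ∑ p : Fin n × Fin n, B p.1 p.2 * (∑ j : Fin n, M p.1 j * C p.2 j) := by
      rw [Fintype.sum_prod_type]
      apply Finset.sum_congr rfl
      intro i _
      calc ∑ j : Fin n, M i j * (B*C) i j
          = ∑ j : Fin n, ∑ l : Fin n, M i j * (B i l * C l j) := by
            apply Finset.sum_congr rfl
            intro j _
            rw [Matrix.mul_apply, Finset.mul_sum]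
        _ = ∑ l : Fin n, ∑ j : Fin n, M i j * (B i l * C l j) := Finset.sum_comm
        _ = ∑ l : Fin n, B i l * ∑ j : Fin n, M i j * C l j := by
            apply Finset.sum_congr rfl
            intro l _
            rw [Finset.mul_sum]
            apply Finset.sum_congr rfl
            intro j _
            ring
    rw [expand]
    have cs := Finset.sum_mul_sq_le_sq_mul_sq Finset.univ (fun p : Fin n × Fin n => B p.1 p.2)
      (fun p : Fin n × Fin n => ∑ j : Fin n, M p.1 j * C p.2 j)
    have h1 : ∑ p : Fin n × Fin n, B p.1 p.2 ^ 2 = ∑ i : Fin n, ∑ j : Fin n, B i j ^ 2 := by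
      rw [Fintype.sum_prod_type]
    have h2 : ∑ p : Fin n × Fin n, (∑ j : Fin n, M p.1 j * C p.2 j)^2 ≤ W := by
      rw [Fintype.sum_prod_type]
      rw [Finset.sum_comm]
      calc ∑ l : Fin n, ∑ i : Fin n, (∑ j : Fin n, M i j * C l j)^2
          ≤ ∑ l : Fin n, ∑ j : Fin n, C l j ^ 2 :=
            Finset.sum_le_sum (fun l _ => hM (fun j => C l j))
        _ = W := by rw [hWdef]; exact Finset.sum_comm
    calc ∑ p : Fin n × Fin n, B p.1 p.2 * (∑ j : Fin n, M p.1 j * C p.2 j)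
        ≤ |∑ p : Fin n × Fin n, B p.1 p.2 * (∑ j : Fin n, M p.1 j * C p.2 j)| := le_abs_self _
      _ = Real.sqrt ((∑ p : Fin n × Fin n, B p.1 p.2 * (∑ j : Fin n, M p.1 j * C p.2 j))^2) :=
          (Real.sqrt_sq_eq_abs _).symm
      _ ≤ Real.sqrt ((∑ p : Fin n × Fin n, B p.1 p.2 ^2)
            * (∑ p : Fin n × Fin n, (∑ j : Fin n, M p.1 j * C p.2 j)^2)) := Real.sqrt_le_sqrt cs
      _ ≤ Real.sqrt ((∑ p : Fin n × Fin n, B p.1 p.2 ^2) * W) := by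
          apply Real.sqrt_le_sqrt
          apply mul_le_mul_of_nonneg_left h2 (by positivity)
      _ = frob n B * Real.sqrt W := by
          rw [Real.sqrt_mul (by positivity), h1]
          rfl
  -- ============ main normalization chain ============
  have hmain : Real.sqrt k * (frob n B * Real.sqrt W) / n
      ≤ 1 / Real.sqrt n * sens n b k C * frob n B := by
    have hsn : Real.sqrt n * Real.sqrt n = (n:ℝ) := Real.mul_self_sqrt hnR.le
    have hsn0 : Real.sqrt n ≠ 0 := (Real.sqrt_pos.mpr hnR).ne'
    have h2 : Real.sqrt ((k:ℝ)*W/n) = Real.sqrt k * Real.sqrt W / Real.sqrt n := by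
      rw [Real.sqrt_div (by positivity), Real.sqrt_mul (by positivity)]
    have h1 : Real.sqrt ((k:ℝ)*W/(n:ℝ)) * frob n B ≤ sens n b k C * frob n B :=
      mul_le_mul_of_nonneg_right hsens hfrob0
    rw [h2] at h1
    calc Real.sqrt k * (frob n B * Real.sqrt W) / n
        = Real.sqrt k * Real.sqrt W / Real.sqrt n * frob n B / Real.sqrt n := by
          rw [show ((n:ℝ)) = Real.sqrt n * Real.sqrt n from hsn.symm]
          field_simp
          rw [Real.sqrt_sq (Real.sqrt_nonneg _)]
      _ ≤ sens n b k C * frob n B / Real.sqrt n := by gcongr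
      _ = 1 / Real.sqrt n * sens n b k C * frob n B := by ring
  -- ============ identity test matrix, trace bound ============
  have hopI : ∀ x : Fin n → ℝ,
      ∑ i : Fin n, (∑ j : Fin n, (1 : Matrix (Fin n) (Fin n) ℝ) i j * x j)^2
        ≤ ∑ j : Fin n, x j ^ 2 := by
    intro x
    apply le_of_eq
    apply Finset.sum_congr rfl
    intro i _
    congr 1
    calc ∑ j : Fin n, (1 : Matrix (Fin n) (Fin n) ℝ) i j * x j
        = ∑ j : Fin n, (if i = j then x j else 0) := by
          apply Finset.sum_congr rfl
          intro j _
          rw [Matrix.one_apply]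
          by_cases h : i = j
          · rw [if_pos h, if_pos h, one_mul]
          · rw [if_neg h, if_neg h, zero_mul]
      _ = x i := by rw [Finset.sum_ite_eq]; simp
  have htr : (n:ℝ) ≤ frob n B * Real.sqrt W := by
    refine le_trans (le_of_eq ?_) (hkey 1 hopI)
    have hrow : ∀ i : Fin n,
        ∑ j : Fin n, (1 : Matrix (Fin n) (Fin n) ℝ) i j * Amat n α β i j = Amat n α β i i := by
      intro i
      calc ∑ j : Fin n, (1 : Matrix (Fin n) (Fin n) ℝ) i j * Amat n α β i j
          = ∑ j : Fin n, (if i = j then Amat n α β i j else 0) := by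
            apply Finset.sum_congr rfl
            intro j _
            rw [Matrix.one_apply]
            by_cases h : i = j
            · rw [if_pos h, if_pos h, one_mul]
            · rw [if_neg h, if_neg h, zero_mul]
        _ = Amat n α β i i := by rw [Finset.sum_ite_eq]; simp
    rw [Finset.sum_congr rfl (fun i _ => hrow i)]
    have hAii : ∀ i : Fin n, Amat n α β i i = 1 := by
      intro i
      show (if (i:ℕ) ≤ (i:ℕ) then aCoef α β ((i:ℕ)-(i:ℕ)) else 0) = 1
      rw [if_pos le_rfl, Nat.sub_self]
      unfold aCoef
      rw [Finset.sum_range_one]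
      norm_num
    rw [Finset.sum_congr rfl (fun i _ => hAii i)]
    simp
  constructor
  -- ============ α = 1 branch ============
  · intro hα1
    subst hα1
    set Mm : Matrix (Fin n) (Fin n) ℝ :=
      Matrix.of (fun i j : Fin n => (Real.pi * (((i:ℕ):ℝ) - ((j:ℕ):ℝ) + 1/2))⁻¹) with hMm
    have hop : ∀ x : Fin n → ℝ,
        ∑ i : Fin n, (∑ j : Fin n, Mm i j * x j)^2 ≤ ∑ j : Fin n, x j ^ 2 := by
      intro x
      exact hilbert_bound n x
    have h := hkey Mm hop
    have hlow : (n:ℝ) * Real.log ((n:ℝ)+1) * Real.pi⁻¹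
        ≤ ∑ i : Fin n, ∑ j : Fin n, Mm i j * Amat n 1 β i j := by
      have hstep : ∀ i j : Fin n,
          (if (j:ℕ) ≤ (i:ℕ) then Real.pi⁻¹ * gR ((i:ℕ)-(j:ℕ)) else 0) ≤ Mm i j * Amat n 1 β i j := by
        intro i j
        by_cases hij : (j:ℕ) ≤ (i:ℕ)
        · rw [if_pos hij]
          have hA : (1:ℝ) ≤ Amat n 1 β i j := by
            show (1:ℝ) ≤ if (j:ℕ) ≤ (i:ℕ) then aCoef 1 β ((i:ℕ)-(j:ℕ)) else 0
            rw [if_pos hij]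
            unfold aCoef
            calc (1:ℝ) = 1^((i:ℕ)-(j:ℕ)) * β^(((i:ℕ)-(j:ℕ)) - ((i:ℕ)-(j:ℕ))) := by simp
              _ ≤ ∑ t ∈ Finset.range (((i:ℕ)-(j:ℕ))+1), 1^t * β^(((i:ℕ)-(j:ℕ))-t) :=
                Finset.single_le_sum (f := fun t => (1:ℝ)^t * β^(((i:ℕ)-(j:ℕ))-t))
                  (fun t _ => by positivity) (Finset.self_mem_range_succ _)
          have hM : Mm i j = Real.pi⁻¹ * gR ((i:ℕ)-(j:ℕ)) := by
            show (Real.pi * (((i:ℕ):ℝ) - ((j:ℕ):ℝ) + 1/2))⁻¹ = _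
            unfold gR
            rw [mul_inv]
            congr 2
            rw [Nat.cast_sub hij]
          have hMnn : 0 ≤ Mm i j := by
            rw [hM]
            have := gR_nonneg ((i:ℕ)-(j:ℕ))
            positivity
          calc Real.pi⁻¹ * gR ((i:ℕ)-(j:ℕ)) = Mm i j * 1 := by rw [hM, mul_one]
            _ ≤ Mm i j * Amat n 1 β i j := mul_le_mul_of_nonneg_left hA hMnn
        · rw [if_neg hij]
          have hA0 : Amat n 1 β i j = 0 := by
            show (if (j:ℕ) ≤ (i:ℕ) then aCoef 1 β ((i:ℕ)-(j:ℕ)) else 0) = 0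
            rw [if_neg hij]
          rw [hA0, mul_zero]
      have hsum : ∑ i : Fin n, ∑ j : Fin n, (if (j:ℕ) ≤ (i:ℕ) then Real.pi⁻¹ * gR ((i:ℕ)-(j:ℕ)) else 0)
          = Real.pi⁻¹ * ∑ m ∈ Finset.range n, Hh (m+1) := by
        rw [← grid_eq n, Finset.sum_comm]
        have h1 : ∀ j : Fin n,
            ∑ i : Fin n, (if (j:ℕ) ≤ (i:ℕ) then Real.pi⁻¹ * gR ((i:ℕ)-(j:ℕ)) else 0)
            = Real.pi⁻¹ * ∑ i ∈ Finset.range n, (if (j:ℕ) ≤ i then gR (i-(j:ℕ)) else 0) := by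
          intro j
          rw [Finset.mul_sum]
          rw [← Fin.sum_univ_eq_sum_range
            (fun i => Real.pi⁻¹ * (if (j:ℕ) ≤ i then gR (i-(j:ℕ)) else 0)) n]
          apply Finset.sum_congr rfl
          intro i _
          by_cases hij : (j:ℕ) ≤ (i:ℕ)
          · rw [if_pos hij, if_pos hij]
          · rw [if_neg hij, if_neg hij, mul_zero]
        rw [Finset.sum_congr rfl (fun j _ => h1 j), ← Finset.mul_sum]
        congr 1
        rw [Fin.sum_univ_eq_sum_range
          (fun j => ∑ i ∈ Finset.range n, (if j ≤ i then gR (i-j) else 0)) n]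
      calc (n:ℝ) * Real.log ((n:ℝ)+1) * Real.pi⁻¹
          = Real.pi⁻¹ * ((n:ℝ) * Real.log ((n:ℝ)+1)) := by ring
        _ ≤ Real.pi⁻¹ * ∑ m ∈ Finset.range n, Hh (m+1) :=
            mul_le_mul_of_nonneg_left (Tsum_lb n) (inv_nonneg.mpr Real.pi_pos.le)
        _ = ∑ i : Fin n, ∑ j : Fin n, (if (j:ℕ) ≤ (i:ℕ) then Real.pi⁻¹ * gR ((i:ℕ)-(j:ℕ)) else 0) :=
            hsum.symm
        _ ≤ ∑ i : Fin n, ∑ j : Fin n, Mm i j * Amat n 1 β i j :=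
            Finset.sum_le_sum (fun i _ => Finset.sum_le_sum (fun j _ => hstep i j))
    have hMA : (n:ℝ) * Real.log ((n:ℝ)+1) * Real.pi⁻¹ ≤ frob n B * Real.sqrt W := le_trans hlow h
    calc Real.sqrt k * Real.log ((n:ℝ) + 1) / Real.pi
        = Real.sqrt k * ((n:ℝ) * Real.log ((n:ℝ)+1) * Real.pi⁻¹) / n := by
          field_simp
      _ ≤ Real.sqrt k * (frob n B * Real.sqrt W) / n := by gcongr
      _ ≤ 1 / Real.sqrt n * sens n b k C * frob n B := hmain
  -- ============ α < 1 branch ============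
  · intro _
    calc Real.sqrt k = Real.sqrt k * (n:ℝ) / n := by field_simp
      _ ≤ Real.sqrt k * (frob n B * Real.sqrt W) / n := by gcongr
      _ ≤ 1 / Real.sqrt n * sens n b k C * frob n B := hmain
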